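/- Define f(C,φ) = (1 + C)/2 − C(1−C)·cos²φ and g(C,φ) = (1 + C)/2 − C(1−C)·sin²φ for C ∈ [0,1], φ ∈ ℝ. Then: (i) f(C,φ) + g(C,φ) = 1 + C² ('Pythagoras in the phase plane'); (ii) 4·f(C,φ)·g(C,φ) = 1 + C² + 2C³ + C²(1−C)²·sin²(2φ); (iii) (1/2)·√(1 + C² + 2C³) ≤ √(f(C,φ)·g(C,φ)) ≤ (1 + C²)/2, and hence the uncertainty product ΔX·ΔP = √(f·g) satisfies 1/2 ≤ ΔX·ΔP ≤ 1, with value 1/2 at C = 0 and value 1 at C = 1. -/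
import Mathlib


noncomputable section

/-- The squared dispersion `(ΔX)²` of the coordinate quadrature in a super-coherent
state with concurrence `C` and phase `φ`. -/
noncomputable def f (C φ : ℝ) : ℝ := (1 + C) / 2 - C * (1 - C) * Real.cos φ ^ 2

/-- The squared dispersion `(ΔP)²` of the momentum quadrature in a super-coherent
state with concurrence `C` and phase `φ`. -/
noncomputable def g (C φ : ℝ) : ℝ := (1 + C) / 2 - C * (1 - C) * Real.sin φ ^ 2

/-- For `C ∈ [0,1]` and `φ ∈ ℝ`:
(i) `f + g = 1 + C²` ("Pythagoras in the phase plane");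
(ii) `4·f·g = 1 + C² + 2C³ + C²(1−C)²·sin²(2φ)`;
(iii) `(1/2)·√(1 + C² + 2C³) ≤ √(f·g) ≤ (1 + C²)/2`, hence the uncertainty product
`ΔX·ΔP = √(f·g)` satisfies `1/2 ≤ ΔX·ΔP ≤ 1`, with value `1/2` at `C = 0` and
value `1` at `C = 1`. -/
theorem uncertainty_product_bounds (C φ : ℝ) (hC0 : 0 ≤ C) (hC1 : C ≤ 1) :
    f C φ + g C φ = 1 + C ^ 2 ∧
    4 * (f C φ * g C φ) =
      1 + C ^ 2 + 2 * C ^ 3 + C ^ 2 * (1 - C) ^ 2 * Real.sin (2 * φ) ^ 2 ∧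
    (1 / 2 * Real.sqrt (1 + C ^ 2 + 2 * C ^ 3) ≤ Real.sqrt (f C φ * g C φ) ∧
      Real.sqrt (f C φ * g C φ) ≤ (1 + C ^ 2) / 2) ∧
    (1 / 2 ≤ Real.sqrt (f C φ * g C φ) ∧ Real.sqrt (f C φ * g C φ) ≤ 1) ∧
    Real.sqrt (f 0 φ * g 0 φ) = 1 / 2 ∧
    Real.sqrt (f 1 φ * g 1 φ) = 1 := by
  have hpyth : Real.sin φ ^ 2 + Real.cos φ ^ 2 = 1 := Real.sin_sq_add_cos_sq φ
  have hs2 : Real.sin (2 * φ) = 2 * Real.sin φ * Real.cos φ := Real.sin_two_mul φ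
  have hsin2sq : Real.sin (2 * φ) ^ 2 ≤ 1 := Real.sin_sq_le_one _
  have hsin2nn : 0 ≤ Real.sin (2 * φ) ^ 2 := sq_nonneg _
  have h1 : f C φ + g C φ = 1 + C ^ 2 := by
    simp only [f, g]; nlinarith [hpyth]
  have h2 : 4 * (f C φ * g C φ) =
      1 + C ^ 2 + 2 * C ^ 3 + C ^ 2 * (1 - C) ^ 2 * Real.sin (2 * φ) ^ 2 := by
    simp only [f, g]; rw [hs2]
    linear_combination (-(2 * (1 + C) * C * (1 - C))) * hpyth
  have hA : (0:ℝ) ≤ 1 + C ^ 2 + 2 * C ^ 3 := by positivity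
  have hlow : (1 + C ^ 2 + 2 * C ^ 3) / 4 ≤ f C φ * g C φ := by
    nlinarith [mul_nonneg (mul_nonneg (sq_nonneg C) (sq_nonneg (1 - C))) hsin2nn]
  have hup : f C φ * g C φ ≤ ((1 + C ^ 2) / 2) ^ 2 := by
    nlinarith [mul_le_of_le_one_right (mul_nonneg (sq_nonneg C) (sq_nonneg (1 - C))) hsin2sq]
  have h3a : 1 / 2 * Real.sqrt (1 + C ^ 2 + 2 * C ^ 3) ≤ Real.sqrt (f C φ * g C φ) := by
    have := Real.sqrt_le_sqrt hlow
    rwa [show (1 + C ^ 2 + 2 * C ^ 3) / 4 = (1 + C ^ 2 + 2 * C ^ 3) * (1/2)^2 by ring,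
      Real.sqrt_mul hA, Real.sqrt_sq (by norm_num), mul_comm] at this
  have h3b : Real.sqrt (f C φ * g C φ) ≤ (1 + C ^ 2) / 2 := by
    have := Real.sqrt_le_sqrt hup
    rwa [Real.sqrt_sq (by positivity)] at this
  have h4a : 1 / 2 ≤ Real.sqrt (f C φ * g C φ) := by
    refine le_trans ?_ h3a
    have h := Real.sqrt_le_sqrt (show (1:ℝ) ≤ 1 + C ^ 2 + 2 * C ^ 3 by nlinarith [sq_nonneg C, pow_nonneg hC0 3])
    rw [Real.sqrt_one] at h
    linarith
  have h4b : Real.sqrt (f C φ * g C φ) ≤ 1 := by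
    refine le_trans h3b (by nlinarith)
  have h5 : Real.sqrt (f 0 φ * g 0 φ) = 1 / 2 := by
    have : f 0 φ * g 0 φ = (1/2)^2 := by simp only [f, g]; ring
    rw [this, Real.sqrt_sq (by norm_num)]
  have h6 : Real.sqrt (f 1 φ * g 1 φ) = 1 := by
    have : f 1 φ * g 1 φ = 1 := by simp only [f, g]; ring
    rw [this, Real.sqrt_one]
  exact ⟨h1, h2, ⟨h3a, h3b⟩, ⟨h4a, h4b⟩, h5, h6⟩
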